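/- If X is a finite-dimensional linear 2-normed space over ℝ, then every b-linear functional on X × ⟨b⟩ is b-sequentially continuous. -/

import Mathlib

open Filter Topology

/-- A linear 2-normed space structure (Gähler): a 2-norm on a real vector space. -/
structure TwoNorm (X : Type*) [AddCommGroup X] [Module ℝ X] where
  N : X → X → ℝ
  eq_zero_iff : ∀ x y, N x y = 0 ↔ ¬ LinearIndependent ℝ ![x, y]
  symm : ∀ x y, N x y = N y x
  smul_left : ∀ (a : ℝ) (x y : X), N (a • x) y = |a| * N x y
  add_right : ∀ x y z : X, N x (y + z) ≤ N x y + N x z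

variable {X : Type*} [AddCommGroup X] [Module ℝ X]

/-- Convergence of a sequence in a linear 2-normed space. -/
def TwoNorm.Conv (P : TwoNorm X) (x : ℕ → X) (l : X) : Prop :=
  ∀ y : X, Tendsto (fun n => P.N (x n - l) y) atTop (nhds 0)

/-- Cauchy sequence in a linear 2-normed space. -/
def TwoNorm.IsCauchySeq (P : TwoNorm X) (x : ℕ → X) : Prop :=
  ∀ z : X, Tendsto (fun p : ℕ × ℕ => P.N (x p.1 - x p.2) z) atTop (nhds 0)

/-- A 2-Banach space: every Cauchy sequence converges. -/
def TwoNorm.Complete (P : TwoNorm X) : Prop :=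
  ∀ x : ℕ → X, P.IsCauchySeq x → ∃ l, P.Conv x l

/-- A b-linear functional (identified with `x ↦ T (x, b)`, a linear map) is bounded. -/
def TwoNorm.BddB (P : TwoNorm X) (b : X) (T : X →ₗ[ℝ] ℝ) : Prop :=
  ∃ M : ℝ, 0 < M ∧ ∀ x, |T x| ≤ M * P.N x b

/-- Norm of a bounded b-linear functional. -/
noncomputable def TwoNorm.bNorm (P : TwoNorm X) (b : X) (T : X →ₗ[ℝ] ℝ) : ℝ :=
  sInf {M : ℝ | 0 < M ∧ ∀ x, |T x| ≤ M * P.N x b}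

/-- Boundedness of a b-linear functional defined on a subspace `W`. -/
def TwoNorm.BddBOn (P : TwoNorm X) (b : X) (W : Submodule ℝ X) (T : W →ₗ[ℝ] ℝ) : Prop :=
  ∃ M : ℝ, 0 < M ∧ ∀ x : W, |T x| ≤ M * P.N x b

/-- Norm of a bounded b-linear functional defined on a subspace `W`. -/
noncomputable def TwoNorm.bNormOn (P : TwoNorm X) (b : X) (W : Submodule ℝ X)
    (T : W →ₗ[ℝ] ℝ) : ℝ :=
  sInf {M : ℝ | 0 < M ∧ ∀ x : W, |T x| ≤ M * P.N x b}

/-- Continuity at a point with respect to the open-ball topology of the 2-norm. -/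
def TwoNorm.ContAt (P : TwoNorm X) (T : X →ₗ[ℝ] ℝ) (x₀ : X) : Prop :=
  ∀ ε > 0, ∃ (e : X) (δ : ℝ), 0 < δ ∧ ∀ x, P.N (x - x₀) e < δ → |T x - T x₀| < ε

lemma TwoNorm.zero_left (P : TwoNorm X) (y : X) : P.N 0 y = 0 := by
  have := P.smul_left 0 0 y
  simpa using this

lemma TwoNorm.nonneg (P : TwoNorm X) (x y : X) : 0 ≤ P.N x y := by
  have h : P.N y 0 ≤ P.N y x + P.N y (-x) := by
    have := P.add_right y x (-x); simpa using this
  have hneg : P.N y (-x) = P.N y x := by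
    rw [P.symm y (-x), show (-x : X) = (-1 : ℝ) • x by simp, P.smul_left, P.symm]
    simp
  have h0 : P.N y 0 = 0 := by rw [P.symm]; exact P.zero_left y
  rw [P.symm]
  nlinarith [h, hneg, h0]

lemma TwoNorm.neg_left (P : TwoNorm X) (x y : X) : P.N (-x) y = P.N x y := by
  rw [show (-x : X) = (-1 : ℝ) • x by simp, P.smul_left]; simp

lemma TwoNorm.add_left (P : TwoNorm X) (x y z : X) :
    P.N (x + y) z ≤ P.N x z + P.N y z := by
  rw [P.symm (x + y) z, P.symm x z, P.symm y z]
  exact P.add_right z x y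

theorem stmt8 [FiniteDimensional ℝ X] (hdim : 2 ≤ Module.finrank ℝ X)
    (P : TwoNorm X) (b : X) (T : X →ₗ[ℝ] ℝ)
    (x : ℕ → X) (l : X) (hx : P.Conv x l) :
    Tendsto (fun n => T (x n)) atTop (nhds (T l)) := by
  classical
  set d := Module.finrank ℝ X with hd
  let e : Module.Basis (Fin d) ℝ X := Module.finBasis ℝ X
  have hker : ∀ v : X, (∑ i, P.N v (e i)) = 0 → v = 0 := by
    intro v hv
    by_contra hv0
    have hall : ∀ i, P.N v (e i) = 0 := by
      intro i
      exact (Finset.sum_eq_zero_iff_of_nonneg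
        (fun i _ => P.nonneg v (e i))).1 hv i (Finset.mem_univ i)
    have hdep : ∀ i, ∃ a : ℝ, a • v = e i := by
      intro i
      have h := (P.eq_zero_iff v (e i)).1 (hall i)
      rw [LinearIndependent.pair_iff' hv0] at h
      push_neg at h
      exact h
    have h0 : (0 : ℕ) < d := by omega
    have h1 : (1 : ℕ) < d := by omega
    obtain ⟨a, ha⟩ := hdep ⟨0, h0⟩
    obtain ⟨c, hc⟩ := hdep ⟨1, h1⟩
    have hcv : c • e (⟨0, h0⟩ : Fin d) = a • e (⟨1, h1⟩ : Fin d) := by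
      rw [← ha, ← hc, smul_smul, smul_smul, mul_comm]
    have hne : (⟨0, h0⟩ : Fin d) ≠ ⟨1, h1⟩ := by simp [Fin.ext_iff]
    have hrepr := congrArg (fun w => (e.repr w) (⟨0, h0⟩ : Fin d)) hcv
    simp only [map_smul, e.repr_self, Finsupp.smul_apply, Finsupp.single_apply,
      if_pos rfl, if_neg (Ne.symm hne)] at hrepr
    simp at hrepr
    have : e (⟨1, h1⟩ : Fin d) = 0 := by rw [← hc, hrepr, zero_smul]
    exact e.ne_zero _ this
  let f : AddGroupNorm X :=
    { toFun := fun v => ∑ i, P.N v (e i)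
      map_zero' := by simp [P.zero_left]
      add_le' := fun v w => by
        rw [← Finset.sum_add_distrib]
        exact Finset.sum_le_sum fun i _ => P.add_left v w (e i)
      neg' := fun v => Finset.sum_congr rfl fun i _ => P.neg_left v (e i)
      eq_zero_of_map_eq_zero' := fun v hv => hker v hv }
  letI : NormedAddCommGroup X := f.toNormedAddCommGroup
  letI : NormedSpace ℝ X := ⟨fun a v => by
    have : ‖a • v‖ = ∑ i, P.N (a • v) (e i) := rfl
    rw [this, show ‖v‖ = ∑ i, P.N v (e i) from rfl]
    rw [Real.norm_eq_abs, Finset.mul_sum]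
    exact le_of_eq (Finset.sum_congr rfl fun i _ => P.smul_left a v (e i))⟩
  have hcont : Continuous T := T.continuous_of_finiteDimensional
  have hxl : Tendsto x atTop (𝓝 l) := by
    rw [tendsto_iff_norm_sub_tendsto_zero]
    have heq : (fun n => ‖x n - l‖) = fun n => ∑ i, P.N (x n - l) (e i) := rfl
    rw [heq]
    have hsum := tendsto_finset_sum (f := fun i n => P.N (x n - l) (e i))
      Finset.univ (fun i _ => hx (e i))
    simpa using hsum
  exact ((hcont.tendsto l).comp hxl : _)
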